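/- For every x ∈ Σ_k^n and every integer r with 1 ≤ r ≤ n, the cardinality of the ball of radius r around x satisfies |B_{k,r}(x)| ≤ Σ_{d=0}^{⌊r/2⌋} C(n,d)² · C(n−d+1, r−2d) · (k−1)^{r−2d} · k^d, where C(·,·) denotes the binomial coefficient. -/

import Mathlib

namespace Levenshtein

structure Cost (α β δ : Type*) where
  delete : α → δ
  insert : β → δ
  substitute : α → β → δ

def defaultCost {α : Type*} [DecidableEq α] : Cost α α ℕ where
  delete _ := 1
  insert _ := 1
  substitute a b := if a = b then 0 else 1

def impl {α β δ : Type*} [AddZeroClass δ] [Min δ] (C : Cost α β δ)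
    (xs : List α) (y : β) (d : {r : List δ // 0 < r.length}) : {r : List δ // 0 < r.length} :=
  let ⟨ds, w⟩ := d
  xs.zip (ds.zip ds.tail) |>.foldr
    (init := ⟨[ds.getLast (List.length_pos_iff.mp w) + C.insert y], by simp⟩)
    (fun ⟨x, d₀, d₁⟩ ⟨r, w⟩ =>
      ⟨min (C.delete x + r[0]) (min (C.insert y + d₀) (C.substitute x y + d₁)) :: r, by simp⟩)

end Levenshtein

def suffixLevenshtein {α β δ : Type*} [AddZeroClass δ] [Min δ] (C : Levenshtein.Cost α β δ)
    (xs : List α) (ys : List β) : {r : List δ // 0 < r.length} :=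
  ys.foldr
    (Levenshtein.impl C xs)
    (xs.foldr (init := ⟨[0], by simp⟩) (fun a ⟨r, w⟩ => ⟨(C.delete a + r[0]) :: r, by simp⟩))

def levenshtein {α β δ : Type*} [AddZeroClass δ] [Min δ] (C : Levenshtein.Cost α β δ)
    (xs : List α) (ys : List β) : δ :=
  let ⟨r, w⟩ := suffixLevenshtein C xs ys
  r[0]

/-- Edit distance between two strings over `Fin k`, with unit costs for
substitution, deletion and insertion, and cost `0` for a match. -/
def editDist {k : ℕ} (x y : List (Fin k)) : ℕ :=
  levenshtein Levenshtein.defaultCost x y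

namespace Levenshtein

theorem defaultCost_delete {k : ℕ} (a : Fin k) : (defaultCost : Cost (Fin k) (Fin k) ℕ).delete a = 1 := rfl

theorem defaultCost_insert {k : ℕ} (a : Fin k) : (defaultCost : Cost (Fin k) (Fin k) ℕ).insert a = 1 := rfl

theorem defaultCost_substitute {k : ℕ} (a b : Fin k) :
    (defaultCost : Cost (Fin k) (Fin k) ℕ).substitute a b = if a = b then 0 else 1 := rfl

variable {α β δ : Type*} [AddZeroClass δ] [Min δ] (C : Cost α β δ)

theorem impl_cons_fst_zero (x : α) (xs : List α) (y : β) (d : δ) (ds : List δ) (w)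
    (w' : 0 < List.length ds) :
    (impl C (x :: xs) y ⟨d :: ds, w⟩).1[0]'(by
      match ds, w' with | _ :: _, _ => simp [impl]) =
      let ⟨r, w⟩ := impl C xs y ⟨ds, w'⟩
      min (C.delete x + r[0]) (min (C.insert y + d) (C.substitute x y + ds[0])) :=
  match ds, w' with | _ :: _, _ => rfl

theorem impl_cons (x : α) (xs : List α) (y : β) (d : δ) (ds : List δ) (w)
    (w' : 0 < List.length ds) :
    impl C (x :: xs) y ⟨d :: ds, w⟩ =
      let ⟨r, w⟩ := impl C xs y ⟨ds, w'⟩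
      ⟨min (C.delete x + r[0]) (min (C.insert y + d) (C.substitute x y + ds[0])) :: r, by simp⟩ :=
  match ds, w' with | _ :: _, _ => rfl

theorem impl_length (xs : List α) (y : β) (d : {r : List δ // 0 < r.length})
    (w : d.1.length = xs.length + 1) :
    (impl C xs y d).1.length = xs.length + 1 := by
  induction xs generalizing d with
  | nil => rfl
  | cons x xs ih =>
    match d, w with
    | ⟨d₁ :: d₂ :: ds, _⟩, w =>
      rw [impl_cons C x xs y d₁ (d₂ :: ds) (by simp) (by simp)]
      simp only [List.length_cons]
      congr 1
      exact ih ⟨d₂ :: ds, (by simp)⟩ (by simpa using w)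

end Levenshtein

open Levenshtein in
theorem suffixLevenshtein_length {α β δ : Type*} [AddZeroClass δ] [Min δ] (C : Cost α β δ)
    (xs : List α) (ys : List β) :
    (suffixLevenshtein C xs ys).1.length = xs.length + 1 := by
  induction ys with
  | nil =>
    dsimp [suffixLevenshtein]
    induction xs with
    | nil => rfl
    | cons _ xs ih =>
      simp_all
  | cons y ys ih =>
    dsimp [suffixLevenshtein]
    rw [impl_length]
    exact ih

open Levenshtein in
theorem suffixLevenshtein_cons₂ {α β δ : Type*} [AddZeroClass δ] [Min δ] (C : Cost α β δ)
    (xs : List α) (y : β) (ys : List β) :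
    suffixLevenshtein C xs (y :: ys) = (impl C xs) y (suffixLevenshtein C xs ys) := rfl

theorem suffixLevenshtein_cons₁_aux {α} {x y : {r : List α // 0 < r.length}}
    (w₀ : x.1[0]'x.2 = y.1[0]'y.2) (w : x.1.tail = y.1.tail) : x = y := by
  match x, y with
  | ⟨hx :: tx, _⟩, ⟨hy :: ty, _⟩ => simp_all

open Levenshtein in
theorem suffixLevenshtein_cons₁ {α β δ : Type*} [AddZeroClass δ] [Min δ] (C : Cost α β δ)
    (x : α) (xs : List α) (ys : List β) :
    suffixLevenshtein C (x :: xs) ys =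
      ⟨levenshtein C (x :: xs) ys :: (suffixLevenshtein C xs ys).1, by simp⟩ := by
  induction ys with
  | nil => rfl
  | cons y ys ih =>
    apply suffixLevenshtein_cons₁_aux
    · rfl
    · rw [suffixLevenshtein_cons₂ C (x :: xs), ih, impl_cons]
      · rfl
      · simp [suffixLevenshtein_length]

open Levenshtein in
theorem levenshtein_nil_cons {α β δ : Type*} [AddZeroClass δ] [Min δ] (C : Cost α β δ)
    (y : β) (ys : List β) :
    levenshtein C ([] : List α) (y :: ys) = levenshtein C [] ys + C.insert y := by
  have h := suffixLevenshtein_length C ([] : List α) ys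
  have key : ∀ (d : {r : List δ // 0 < r.length}) (hd : d.1.length = 1),
      (impl C ([] : List α) y d).1[0]'(by rw [impl_length C [] y d (by simpa using hd)]; simp) =
        d.1[0]'d.2 + C.insert y := by
    rintro ⟨l, hl⟩ hd
    match l, hl, hd with
    | [a], _, _ => rfl
  simp only [levenshtein, suffixLevenshtein_cons₂]
  exact key _ (by simpa using h)

@[simp] theorem levenshtein_nil_nil {α β δ : Type*} [AddZeroClass δ] [Min δ]
    (C : Levenshtein.Cost α β δ) : levenshtein C ([] : List α) ([] : List β) = 0 := rfl

open Levenshtein in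
theorem levenshtein_cons_nil {α β δ : Type*} [AddZeroClass δ] [Min δ] (C : Cost α β δ)
    (x : α) (xs : List α) :
    levenshtein C (x :: xs) ([] : List β) = C.delete x + levenshtein C xs [] := rfl

open Levenshtein in
theorem levenshtein_cons_cons {α β δ : Type*} [AddZeroClass δ] [Min δ] (C : Cost α β δ)
    (x : α) (xs : List α) (y : β) (ys : List β) :
    levenshtein C (x :: xs) (y :: ys) =
      min (C.delete x + levenshtein C xs (y :: ys))
        (min (C.insert y + levenshtein C (x :: xs) ys)
          (C.substitute x y + levenshtein C xs ys)) := by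
  have h1 := suffixLevenshtein_cons₁ C x xs ys
  have h2 := suffixLevenshtein_cons₁ C x xs (y :: ys)
  have h3 := suffixLevenshtein_length C xs ys
  conv_lhs => simp only [levenshtein]
  rw [suffixLevenshtein_cons₂, h1, impl_cons_fst_zero C x xs y _ _ _ (by omega)]
  simp only [levenshtein, suffixLevenshtein_cons₂]

namespace EditBallAux

variable {k : ℕ}

/-- `Rel x y d i s`: `y` is obtained from `x` by `d` deletions, `i` insertions
and `s` substitutions (in some alignment). -/
inductive Rel : List (Fin k) → List (Fin k) → ℕ → ℕ → ℕ → Prop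
  | nil : Rel [] [] 0 0 0
  | keep {x y : List (Fin k)} {d i s : ℕ} (a : Fin k) :
      Rel x y d i s → Rel (a :: x) (a :: y) d i s
  | sub {x y : List (Fin k)} {d i s : ℕ} (a b : Fin k) :
      a ≠ b → Rel x y d i s → Rel (a :: x) (b :: y) d i (s + 1)
  | del {x y : List (Fin k)} {d i s : ℕ} (a : Fin k) :
      Rel x y d i s → Rel (a :: x) y (d + 1) i s
  | ins {x y : List (Fin k)} {d i s : ℕ} (b : Fin k) :
      Rel x y d i s → Rel x (b :: y) d (i + 1) s

lemma rel_of_lev : ∀ (x y : List (Fin k)) (c : ℕ),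
    levenshtein Levenshtein.defaultCost x y ≤ c →
    ∃ d i s, d + i + s ≤ c ∧ Rel x y d i s := by
  intro x
  induction x with
  | nil =>
    intro y
    induction y with
    | nil => exact fun c _ => ⟨0, 0, 0, by omega, .nil⟩
    | cons b ys ih =>
      intro c h
      rw [levenshtein_nil_cons] at h
      simp only [Levenshtein.defaultCost_insert] at h
      obtain ⟨d, i, s, hc, hr⟩ := ih (c - 1) (by omega)
      exact ⟨d, i + 1, s, by omega, .ins b hr⟩
  | cons a xs ihx =>
    intro y
    induction y with
    | nil =>
      intro c h
      rw [levenshtein_cons_nil] at h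
      simp only [Levenshtein.defaultCost_delete] at h
      obtain ⟨d, i, s, hc, hr⟩ := ihx [] (c - 1) (by omega)
      exact ⟨d + 1, i, s, by omega, .del a hr⟩
    | cons b ys ihy =>
      intro c h
      rw [levenshtein_cons_cons] at h
      rcases min_le_iff.mp h with h1 | h2
      · simp only [Levenshtein.defaultCost_delete] at h1
        obtain ⟨d, i, s, hc, hr⟩ := ihx (b :: ys) (c - 1) (by omega)
        exact ⟨d + 1, i, s, by omega, .del a hr⟩
      · rcases min_le_iff.mp h2 with h2 | h3
        · simp only [Levenshtein.defaultCost_insert] at h2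
          obtain ⟨d, i, s, hc, hr⟩ := ihy (c - 1) (by omega)
          exact ⟨d, i + 1, s, by omega, .ins b hr⟩
        · simp only [Levenshtein.defaultCost_substitute] at h3
          by_cases hab : a = b
          · subst hab
            rw [if_pos rfl] at h3
            obtain ⟨d, i, s, hc, hr⟩ := ihx ys c (by omega)
            exact ⟨d, i, s, hc, .keep a hr⟩
          · rw [if_neg hab] at h3
            obtain ⟨d, i, s, hc, hr⟩ := ihx ys (c - 1) (by omega)
            exact ⟨d, i, s + 1, by omega, .sub a b hab hr⟩

lemma Rel.length_eq {x y : List (Fin k)} {d i s : ℕ} (h : Rel x y d i s) :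
    x.length + i = y.length + d := by
  induction h <;> simp [List.length_cons] at * <;> omega

lemma Rel.pad {x y : List (Fin k)} {d i s : ℕ} (h : Rel x y d i s) :
    d + s < x.length → Rel x y (d + 1) (i + 1) s := by
  induction h with
  | nil => intro h; simp at h
  | keep a hr ih => intro _; exact .del a (.ins a hr)
  | sub a b hab hr ih =>
    intro hlt
    exact .sub a b hab (ih (by simp [List.length_cons] at hlt; omega))
  | del a hr ih =>
    intro hlt
    exact .del a (ih (by simp [List.length_cons] at hlt; omega))
  | ins b hr ih => intro hlt; exact .ins b (ih hlt)

lemma pad_exact {x y : List (Fin k)} {n r : ℕ} (hrn : r ≤ n) (hx : x.length = n) :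
    ∀ (m d s : ℕ), r - (2 * d + s) ≤ m → 2 * d + s ≤ r → Rel x y d d s →
    ∃ d' s', Rel x y d' d' s' ∧ (2 * d' + s' = r ∨ 2 * d' + s' = r - 1) := by
  intro m
  induction m with
  | zero => exact fun d s hm hle hr => ⟨d, s, hr, by omega⟩
  | succ m ih =>
    intro d s hm hle hr
    by_cases hc : r ≤ 2 * d + s + 1
    · exact ⟨d, s, hr, by omega⟩
    · exact ih (d + 1) s (by omega) (by omega) (hr.pad (by omega))

/-- The substituted symbol: `a` shifted by `c+1`, guaranteed to differ from `a`. -/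
def newSym (a : Fin k) (c : Fin (k - 1)) : Fin k :=
  a + ⟨c.val + 1, by have := c.isLt; omega⟩

lemma exists_newSym {a b : Fin k} (hab : a ≠ b) : ∃ c : Fin (k - 1), newSym a c = b := by
  have ha := a.isLt
  have hb := b.isLt
  have hval : a.val ≠ b.val := fun h => hab (Fin.ext h)
  by_cases hlt : a.val < b.val
  · refine ⟨⟨b.val - a.val - 1, by omega⟩, ?_⟩
    apply Fin.ext
    simp only [newSym, Fin.val_add]
    rw [show a.val + (b.val - a.val - 1 + 1) = b.val by omega, Nat.mod_eq_of_lt hb]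
  · refine ⟨⟨k - 1 - (a.val - b.val), by omega⟩, ?_⟩
    apply Fin.ext
    simp only [newSym, Fin.val_add]
    rw [show a.val + (k - 1 - (a.val - b.val) + 1) = k + b.val by omega]
    rw [Nat.add_mod_left, Nat.mod_eq_of_lt hb]

def applyDel : List (Fin k) → List (Option Unit) → List (Fin k)
  | l, [] => l
  | [], _ :: _ => []
  | _ :: l, some _ :: m => applyDel l m
  | a :: l, none :: m => a :: applyDel l m

def applySub : List (Fin k) → List (Option (Fin (k - 1))) → List (Fin k)
  | [], _ => []
  | l, [] => l
  | a :: l, none :: m => a :: applySub l m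
  | a :: l, some c :: m => newSym a c :: applySub l m

def applyIns : List (Fin k) → List (Option (Fin k)) → List (Fin k)
  | l, [] => l
  | l, some b :: m => b :: applyIns l m
  | [], none :: m => applyIns [] m
  | a :: l, none :: m => a :: applyIns l m

lemma applySub_append : ∀ (z : List (Fin k)) (m m' : List (Option (Fin (k - 1)))),
    z.length ≤ m.length → applySub z (m ++ m') = applySub z m := by
  intro z
  induction z with
  | nil => intro m m' _; simp [applySub]
  | cons a l ih =>
    intro m m' h
    cases m with
    | nil => simp at h
    | cons o m =>
      cases o with
      | none =>
        simp only [List.cons_append, applySub, List.append_eq]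
        rw [ih m m' (by simp [List.length_cons] at h; omega)]
      | some c =>
        simp only [List.cons_append, applySub, List.append_eq]
        rw [ih m m' (by simp [List.length_cons] at h; omega)]

lemma Rel.masks {x y : List (Fin k)} {d i s : ℕ} (h : Rel x y d i s) :
    ∃ (db : List (Option Unit)) (sm : List (Option (Fin (k - 1))))
      (im : List (Option (Fin k))),
      db.length = x.length ∧ db.countP (·.isSome) = d ∧
      x.length = d + sm.length ∧ sm.countP (·.isSome) = s ∧
      im.length = y.length ∧ im.countP (·.isSome) = i ∧
      (applyDel x db).length = sm.length ∧
      applyIns (applySub (applyDel x db) sm) im = y := by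
  induction h with
  | nil =>
    refine ⟨[], [], [], ?_, ?_, ?_, ?_, ?_, ?_, ?_, ?_⟩ <;>
      simp [applyDel, applySub, applyIns]
  | keep a hr ih =>
    obtain ⟨db, sm, im, h1, h2, h3, h4, h5, h6, h7, h8⟩ := ih
    refine ⟨none :: db, none :: sm, none :: im, ?_, ?_, ?_, ?_, ?_, ?_, ?_, ?_⟩
    · simp [h1]
    · simp [List.countP_cons, h2]
    · simp [List.length_cons]; omega
    · simp [List.countP_cons, h4]
    · simp [h5]
    · simp [List.countP_cons, h6]
    · simp [applyDel, applySub, h7]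
    · simp only [applyDel, applySub, applyIns, h8]
  | sub a b hab hr ih =>
    obtain ⟨db, sm, im, h1, h2, h3, h4, h5, h6, h7, h8⟩ := ih
    obtain ⟨c, hc⟩ := exists_newSym hab
    refine ⟨none :: db, some c :: sm, none :: im, ?_, ?_, ?_, ?_, ?_, ?_, ?_, ?_⟩
    · simp [h1]
    · simp [List.countP_cons, h2]
    · simp [List.length_cons]; omega
    · simp [List.countP_cons, h4]
    · simp [h5]
    · simp [List.countP_cons, h6]
    · simp [applyDel, applySub, h7]
    · simp only [applyDel, applySub, applyIns, hc, h8]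
  | del a hr ih =>
    obtain ⟨db, sm, im, h1, h2, h3, h4, h5, h6, h7, h8⟩ := ih
    refine ⟨some () :: db, sm, im, ?_, ?_, ?_, ?_, ?_, ?_, ?_, ?_⟩
    · simp [h1]
    · simp [List.countP_cons, h2]
    · simp [List.length_cons]; omega
    · exact h4
    · exact h5
    · exact h6
    · simp [applyDel, h7]
    · simp only [applyDel, h8]
  | ins b hr ih =>
    obtain ⟨db, sm, im, h1, h2, h3, h4, h5, h6, h7, h8⟩ := ih
    refine ⟨db, sm, some b :: im, ?_, ?_, ?_, ?_, ?_, ?_, ?_, ?_⟩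
    · exact h1
    · exact h2
    · exact h3
    · exact h4
    · simp [h5]
    · simp [List.countP_cons, h6]
    · exact h7
    · simp only [applyIns, h8]

/-- Lists of `Option β` of length `m` with exactly `t` entries that are `some`. -/
abbrev MLists (β : Type) (m t : ℕ) : Type :=
  {l : List (Option β) // l.length = m ∧ l.countP (·.isSome) = t}

noncomputable instance instFintypeMLists (β : Type) [Fintype β] (m t : ℕ) :
    Fintype (MLists β m t) :=
  Fintype.ofInjective (fun l => (fun i : Fin m => l.1.get (i.cast l.2.1.symm)))
    (fun l l' h => Subtype.ext (List.ext_get (by rw [l.2.1, l'.2.1]) (fun i h1 h2 => by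
      have := congrFun h ⟨i, by rw [← l.2.1]; exact h1⟩
      exact this)))

lemma card_MLists (β : Type) [Fintype β] :
    ∀ m t, Nat.card (MLists β m t) = m.choose t * Fintype.card β ^ t := by
  intro m
  induction m with
  | zero =>
    intro t
    cases t with
    | zero =>
      have e : MLists β 0 0 ≃ Unit :=
        { toFun := fun _ => ()
          invFun := fun _ => ⟨[], by simp, by simp⟩
          left_inv := fun l => by
            rcases l with ⟨l, hl, hc⟩
            cases l with
            | nil => rfl
            | cons a l => simp at hl
          right_inv := fun _ => rfl }
      rw [Nat.card_congr e]
      simp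
    | succ t =>
      have : IsEmpty (MLists β 0 (t + 1)) :=
        ⟨fun l => by
          rcases l with ⟨l, hl, hc⟩
          rw [List.length_eq_zero_iff.mp hl] at hc
          simp at hc⟩
      rw [Nat.card_of_isEmpty]
      simp
  | succ m ih =>
    intro t
    cases t with
    | zero =>
      let f : MLists β m 0 → MLists β (m + 1) 0 := fun l =>
        ⟨none :: l.1, by simp [l.2.1], by simp [List.countP_cons, l.2.2]⟩
      have hbij : Function.Bijective f := by
        constructor
        · intro a b hab
          rw [Subtype.ext_iff] at hab
          simp only [f, List.cons.injEq, true_and] at hab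
          exact Subtype.ext hab
        · rintro ⟨⟨⟩ | ⟨o, l⟩, hl, hc⟩
          · simp at hl
          · cases o with
            | none =>
              exact ⟨⟨l, by simpa using hl, by simpa [List.countP_cons] using hc⟩, rfl⟩
            | some b => simp [List.countP_cons] at hc
      rw [← Nat.card_congr (Equiv.ofBijective f hbij), ih 0]
      simp
    | succ t =>
      let f : (β × MLists β m t) ⊕ MLists β m (t + 1) → MLists β (m + 1) (t + 1) :=
        fun z =>
        match z with
        | .inl (b, l) => ⟨some b :: l.1, by simp [l.2.1], by simp [List.countP_cons, l.2.2]⟩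
        | .inr l => ⟨none :: l.1, by simp [l.2.1], by simp [List.countP_cons, l.2.2]⟩
      have hbij : Function.Bijective f := by
        constructor
        · rintro (⟨b, l⟩ | l) (⟨b', l'⟩ | l') hab
          · rw [Subtype.ext_iff] at hab
            simp only [f, List.cons.injEq, Option.some.injEq] at hab
            obtain ⟨hb, hl⟩ := hab
            subst hb
            rw [Subtype.ext hl]
          · rw [Subtype.ext_iff] at hab
            simp [f] at hab
          · rw [Subtype.ext_iff] at hab
            simp [f] at hab
          · rw [Subtype.ext_iff] at hab
            simp only [f, List.cons.injEq, true_and] at hab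
            rw [Subtype.ext hab]
        · rintro ⟨⟨⟩ | ⟨o, l⟩, hl, hc⟩
          · simp at hl
          · cases o with
            | none =>
              exact ⟨.inr ⟨l, by simpa using hl, by simpa [List.countP_cons] using hc⟩, rfl⟩
            | some b =>
              refine ⟨.inl (b, ⟨l, by simpa using hl, ?_⟩), rfl⟩
              simp [List.countP_cons] at hc
              omega
      rw [← Nat.card_congr (Equiv.ofBijective f hbij), Nat.card_sum, Nat.card_prod,
        ih t, ih (t + 1), Nat.card_eq_fintype_card (α := β), Nat.choose_succ_succ]
      ring

/-- Parameter space for the covering of the ball. -/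
abbrev Param (k n r : ℕ) : Type :=
  (d : Fin (r / 2 + 1)) ×
    (MLists Unit n d.val × MLists (Fin (k - 1)) (n - d.val + 1) (r - 2 * d.val) ×
      MLists (Fin k) n d.val)

def decode (x : List (Fin k)) {n r : ℕ} (p : Param k n r) : List (Fin k) :=
  applyIns (applySub (applyDel x p.2.1.1) p.2.2.1.1) p.2.2.2.1

lemma exists_param {n r : ℕ} (hk : 2 ≤ k) (hr1 : 1 ≤ r) (hrn : r ≤ n)
    (x y : List (Fin k)) (hx : x.length = n) (hy : y.length = n)
    (h : levenshtein Levenshtein.defaultCost x y ≤ r) :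
    ∃ p : Param k n r, decode x p = y := by
  obtain ⟨d0, i0, s0, hc, hrel⟩ := rel_of_lev x y r h
  have hlen := hrel.length_eq
  have hi0 : i0 = d0 := by omega
  subst hi0
  obtain ⟨d, s, hrel2, hsum⟩ :=
    pad_exact hrn hx (r - (2 * i0 + s0)) i0 s0 (le_refl _) (by omega) hrel
  obtain ⟨db, sm, im, h1, h2, h3, h4, h5, h6, h7, h8⟩ := hrel2.masks
  have hd2 : 2 * d ≤ r := by omega
  have hdle : d ≤ r / 2 := by omega
  have hsm : sm.length = n - d := by omega
  rcases hsum with hs | hs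
  · -- s = r - 2d : pad the substitution mask with a `none`
    refine ⟨⟨⟨d, by omega⟩, ⟨db, by omega, h2⟩,
      ⟨sm ++ [none], by simp [hsm], by simp [List.countP_append, h4]; omega⟩,
      ⟨im, by omega, h6⟩⟩, ?_⟩
    show applyIns (applySub (applyDel x db) (sm ++ [none])) im = y
    rw [applySub_append _ _ _ (le_of_eq h7)]
    exact h8
  · -- s = r - 2d - 1 : pad the substitution mask with a dummy `some`
    refine ⟨⟨⟨d, by omega⟩, ⟨db, by omega, h2⟩,
      ⟨sm ++ [some ⟨0, by omega⟩], by simp [hsm], by simp [List.countP_append, h4]; omega⟩,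
      ⟨im, by omega, h6⟩⟩, ?_⟩
    show applyIns (applySub (applyDel x db) (sm ++ [some ⟨0, by omega⟩])) im = y
    rw [applySub_append _ _ _ (le_of_eq h7)]
    exact h8

lemma card_Param (k n r : ℕ) :
    Nat.card (Param k n r) =
      ∑ d ∈ Finset.range (r / 2 + 1),
        (n.choose d) ^ 2 * ((n - d + 1).choose (r - 2 * d)) *
          (k - 1) ^ (r - 2 * d) * k ^ d := by
  rw [Nat.card_eq_fintype_card, Fintype.card_sigma]
  rw [Fin.sum_univ_eq_sum_range (fun m => Fintype.card
    (MLists Unit n m × MLists (Fin (k - 1)) (n - m + 1) (r - 2 * m) × MLists (Fin k) n m))]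
  refine Finset.sum_congr rfl fun d _ => ?_
  rw [Fintype.card_prod, Fintype.card_prod,
    ← Nat.card_eq_fintype_card (α := MLists Unit n d),
    ← Nat.card_eq_fintype_card (α := MLists (Fin (k - 1)) (n - d + 1) (r - 2 * d)),
    ← Nat.card_eq_fintype_card (α := MLists (Fin k) n d),
    card_MLists, card_MLists, card_MLists, Fintype.card_unit, Fintype.card_fin,
    Fintype.card_fin]
  ring

lemma editDist_self (l : List (Fin k)) : editDist l l = 0 := by
  induction l with
  | nil => simp [editDist]
  | cons a l ih =>
    have h : editDist (a :: l) (a :: l) ≤ 0 := by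
      rw [editDist, levenshtein_cons_cons]
      refine le_trans (min_le_right _ _) (le_trans (min_le_right _ _) ?_)
      simp only [Levenshtein.defaultCost_substitute, eq_self_iff_true, if_true, Nat.zero_add,
        zero_add]
      exact le_of_eq ih
    omega

end EditBallAux

open EditBallAux in
/-- Upper bound on the size of the ball of radius `r` around `x ∈ Σ_k^n`:
`|B_{k,r}(x)| ≤ Σ_{d=0}^{⌊r/2⌋} C(n,d)²·C(n−d+1, r−2d)·(k−1)^{r−2d}·k^d`. -/
theorem ball_card_upper_bound (k n r : ℕ) (hk : 2 ≤ k)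
    (hr1 : 1 ≤ r) (hrn : r ≤ n) (x : Fin n → Fin k) :
    Nat.card {y : Fin n → Fin k // editDist (List.ofFn x) (List.ofFn y) ≤ r} ≤
      ∑ d ∈ Finset.range (r / 2 + 1),
        (n.choose d) ^ 2 * ((n - d + 1).choose (r - 2 * d)) *
          (k - 1) ^ (r - 2 * d) * k ^ d := by
  classical
  have hself : editDist (List.ofFn x) (List.ofFn x) ≤ r := by
    rw [editDist_self]; omega
  have hex : ∃ F : Param k n r →
      {y : Fin n → Fin k // editDist (List.ofFn x) (List.ofFn y) ≤ r},
      Function.Surjective F := by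
    refine ⟨fun p =>
      if h : ∃ z : {y : Fin n → Fin k // editDist (List.ofFn x) (List.ofFn y) ≤ r},
          List.ofFn z.1 = decode (List.ofFn x) p then h.choose else ⟨x, hself⟩, ?_⟩
    intro z
    obtain ⟨p, hp⟩ := exists_param hk hr1 hrn (List.ofFn x) (List.ofFn z.1)
      (by simp) (by simp) z.2
    refine ⟨p, ?_⟩
    have hex' : ∃ z' : {y : Fin n → Fin k // editDist (List.ofFn x) (List.ofFn y) ≤ r},
        List.ofFn z'.1 = decode (List.ofFn x) p := ⟨z, hp.symm⟩
    simp only [dif_pos hex']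
    exact Subtype.ext (List.ofFn_injective (hex'.choose_spec.trans hp))
  obtain ⟨F, hF⟩ := hex
  calc Nat.card {y : Fin n → Fin k // editDist (List.ofFn x) (List.ofFn y) ≤ r}
      ≤ Nat.card (Param k n r) := Nat.card_le_card_of_surjective F hF
    _ = _ := card_Param k n r
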